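/- Let Y_n be a Bernoulli random graph on n nodes with edge probability π_n = logit⁻¹(θ₀ − log n), θ₀ ∈ ℝ fixed, and let E_n denote its number of edges. Then the maximum likelihood estimator θ̂_n = logit(E_n / C(n,2)) + log n (defined when 0 < E_n < C(n,2)) converges in probability to θ₀ as n → ∞; i.e., the MLE of θ is consistent despite the model being non-projective. -/

import Mathlib

open Filter

noncomputable def invlogit (x : ℝ) : ℝ := Real.exp x / (1 + Real.exp x)

noncomputable def logit (p : ℝ) : ℝ := Real.log (p / (1 - p))

open Classical in
/-- Probability that a Binomial(`m`,`p`) random variable lands in the set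
of outcomes satisfying `A`. -/
noncomputable def binomProb (m : ℕ) (p : ℝ) (A : ℕ → Prop) : ℝ :=
  ∑ k ∈ (Finset.range (m + 1)).filter A,
    (m.choose k : ℝ) * p ^ k * (1 - p) ^ (m - k)

namespace OffsetMLE

noncomputable def w (m : ℕ) (p : ℝ) (k : ℕ) : ℝ :=
  (m.choose k : ℝ) * p ^ k * (1 - p) ^ (m - k)

lemma w_nonneg {m : ℕ} {p : ℝ} (h0 : 0 ≤ p) (h1 : p ≤ 1) (k : ℕ) : 0 ≤ w m p k := by
  have h2 : (0:ℝ) ≤ 1 - p := by linarith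
  unfold w; positivity

lemma sum_w (m : ℕ) (p : ℝ) : ∑ k ∈ Finset.range (m+1), w m p k = 1 := by
  have h := add_pow p (1-p) m
  simp only [add_sub_cancel, one_pow] at h
  rw [h]
  refine Finset.sum_congr rfl fun k _ => ?_
  unfold w; ring

lemma sum_kw (m : ℕ) (p : ℝ) : ∑ k ∈ Finset.range (m+1), (k:ℝ) * w m p k = m * p := by
  cases m with
  | zero => simp [w]
  | succ n =>
    rw [Finset.sum_range_succ']
    simp only [Nat.cast_zero, zero_mul, add_zero]
    have key : ∀ j ∈ Finset.range (n+1), ((j:ℝ)+1) * w (n+1) p (j+1)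
        = ((n:ℝ)+1) * p * w n p j := by
      intro j hj
      have hc : ((n+1) * n.choose j : ℝ) = ((n+1).choose (j+1) * (j+1) : ℝ) := by
        exact_mod_cast congrArg (fun t : ℕ => (t:ℝ)) (Nat.add_one_mul_choose_eq n j)
      have hsub : n + 1 - (j+1) = n - j := by omega
      unfold w
      rw [hsub]
      push_cast at hc ⊢
      linear_combination (-(p ^ j * p * (1 - p) ^ (n - j))) * hc
    push_cast
    rw [Finset.sum_congr rfl key, ← Finset.mul_sum, sum_w, mul_one]

lemma sum_k2w (m : ℕ) (p : ℝ) :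
    ∑ k ∈ Finset.range (m+1), (k:ℝ) * ((k:ℝ) - 1) * w m p k = m * (m-1) * p^2 := by
  match m with
  | 0 => simp [w]
  | 1 =>
    simp [Finset.sum_range_succ, w]
  | (n+2) =>
    rw [Finset.sum_range_succ']
    simp only [Nat.cast_zero, zero_mul, add_zero]
    rw [Finset.sum_range_succ']
    push_cast
    simp only [zero_add, one_mul, sub_self, mul_zero, zero_mul, add_zero]
    have key : ∀ j ∈ Finset.range (n+1), ((j:ℝ)+1+1) * ((j:ℝ)+1+1-1) * w (n+2) p (j+1+1)
        = ((n:ℝ)+2) * ((n:ℝ)+1) * p^2 * w n p j := by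
      intro j hj
      have hc1 : ((n+2) * (n+1).choose (j+1) : ℝ) = ((n+2).choose (j+2) * (j+2) : ℝ) := by
        exact_mod_cast congrArg (fun t : ℕ => (t:ℝ)) (Nat.add_one_mul_choose_eq (n+1) (j+1))
      have hc2 : ((n+1) * n.choose j : ℝ) = ((n+1).choose (j+1) * (j+1) : ℝ) := by
        exact_mod_cast congrArg (fun t : ℕ => (t:ℝ)) (Nat.add_one_mul_choose_eq n j)
      have hsub : n + 2 - (j+2) = n - j := by omega
      unfold w
      have hsub' : j + 1 + 1 = j + 2 := by omega
      rw [hsub', hsub]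
      push_cast at hc1 hc2 ⊢
      linear_combination (-(p^j * p^2 * (1-p)^(n-j))) * ((((j:ℝ)+1) * hc1) + (((n:ℝ)+2) * hc2))
    rw [Finset.sum_congr rfl key, ← Finset.mul_sum, sum_w, mul_one]
    ring

lemma sum_var (m : ℕ) (p : ℝ) :
    ∑ k ∈ Finset.range (m+1), ((k:ℝ) - m*p)^2 * w m p k = m * p * (1-p) := by
  have h0 := sum_w m p
  have h1 := sum_kw m p
  have h2 := sum_k2w m p
  have expand : ∀ k ∈ Finset.range (m+1), ((k:ℝ) - m*p)^2 * w m p k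
      = (k:ℝ) * ((k:ℝ) - 1) * w m p k + (1 - 2*(m:ℝ)*p) * ((k:ℝ) * w m p k)
        + ((m:ℝ)*p)^2 * w m p k := by
    intro k _; ring
  rw [Finset.sum_congr rfl expand, Finset.sum_add_distrib, Finset.sum_add_distrib,
    ← Finset.mul_sum, ← Finset.mul_sum, h0, h1, h2]
  ring

lemma binomProb_nonneg (m : ℕ) (p : ℝ) (A : ℕ → Prop) (hp0 : 0 ≤ p) (hp1 : p ≤ 1) :
    0 ≤ binomProb m p A := by
  classical
  refine Finset.sum_nonneg fun k _ => ?_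
  exact w_nonneg hp0 hp1 k

lemma cheby (m : ℕ) (p t : ℝ) (hp0 : 0 ≤ p) (hp1 : p ≤ 1) (ht : 0 < t)
    (A : ℕ → Prop) (hA : ∀ k, k ≤ m → A k → t ≤ |(k:ℝ) - m*p|) :
    binomProb m p A ≤ m*p*(1-p)/t^2 := by
  classical
  have key : t^2 * binomProb m p A ≤ m*p*(1-p) := by
    rw [← sum_var m p, binomProb, Finset.mul_sum]
    calc ∑ k ∈ (Finset.range (m+1)).filter A,
          t^2 * ((m.choose k : ℝ) * p ^ k * (1 - p) ^ (m - k))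
        ≤ ∑ k ∈ (Finset.range (m+1)).filter A, ((k:ℝ) - m*p)^2 * w m p k := by
          refine Finset.sum_le_sum fun k hk => ?_
          obtain ⟨hk1, hk2⟩ := Finset.mem_filter.mp hk
          have hk3 : k ≤ m := by
            have := Finset.mem_range.mp hk1; omega
          have habs := hA k hk3 hk2
          have hsq : t^2 ≤ ((k:ℝ) - m*p)^2 := by
            calc t^2 ≤ |(k:ℝ) - m*p|^2 := by
                  apply pow_le_pow_left₀ ht.le habs 2
              _ = ((k:ℝ) - m*p)^2 := sq_abs _
          exact mul_le_mul_of_nonneg_right hsq (w_nonneg hp0 hp1 k)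
      _ ≤ ∑ k ∈ Finset.range (m+1), ((k:ℝ) - m*p)^2 * w m p k := by
          refine Finset.sum_le_sum_of_subset_of_nonneg (Finset.filter_subset _ _)
            fun k _ _ => ?_
          have h := w_nonneg (m:=m) (p:=p) hp0 hp1 k
          positivity
  rw [le_div_iff₀ (by positivity)]
  linarith

lemma invlogit_pos (x : ℝ) : 0 < invlogit x := by
  unfold invlogit
  have := Real.exp_pos x
  positivity

lemma invlogit_lt_one (x : ℝ) : invlogit x < 1 := by
  unfold invlogit
  have := Real.exp_pos x
  rw [div_lt_one (by positivity)]
  linarith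

lemma invlogit_strictMono : StrictMono invlogit := by
  intro a b hab
  unfold invlogit
  have ha := Real.exp_pos a
  have hb := Real.exp_pos b
  rw [div_lt_div_iff₀ (by positivity) (by positivity)]
  have h := Real.exp_lt_exp.mpr hab
  nlinarith

lemma invlogit_logit {p : ℝ} (h0 : 0 < p) (h1 : p < 1) : invlogit (logit p) = p := by
  unfold invlogit logit
  have hp : (0:ℝ) < p / (1 - p) := by
    apply div_pos h0; linarith
  rw [Real.exp_log hp]
  have h1p : 1 - p ≠ 0 := by linarith
  field_simp
  ring

lemma gap_hi (a b : ℝ) (ha0 : 0 < a) (ha1 : a ≤ 1) (hb : 1 < b) :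
    (a/(1+a)) * ((b-1)/(1+b)) ≤ a*b/(1+a*b) - a/(1+a) := by
  have h1 : (0:ℝ) < 1 + a := by linarith
  have h2 : (0:ℝ) < 1 + b := by linarith
  have h3 : (0:ℝ) < 1 + a*b := by nlinarith
  have hr : a*b/(1+a*b) - a/(1+a) = a*(b-1)/((1+a)*(1+a*b)) := by
    field_simp
    ring
  have hl : (a/(1+a)) * ((b-1)/(1+b)) = a*(b-1)/((1+a)*(1+b)) := by
    field_simp
  rw [hr, hl]
  have hnum : 0 ≤ a*(b-1) := by nlinarith
  have hden : (1+a)*(1+a*b) ≤ (1+a)*(1+b) := by nlinarith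
  gcongr

lemma gap_lo (a c : ℝ) (ha0 : 0 < a) (ha1 : a ≤ 1) (hc0 : 0 < c) (hc1 : c < 1) :
    (a/(1+a)) * ((1-c)/2) ≤ a/(1+a) - a*c/(1+a*c) := by
  have h1 : (0:ℝ) < 1 + a := by linarith
  have h3 : (0:ℝ) < 1 + a*c := by nlinarith
  have hr : a/(1+a) - a*c/(1+a*c) = a*(1-c)/((1+a)*(1+a*c)) := by
    field_simp
    ring
  have hl : (a/(1+a)) * ((1-c)/2) = a*(1-c)/((1+a)*2) := by
    field_simp
  rw [hr, hl]
  have hnum : 0 ≤ a*(1-c) := by nlinarith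
  have hden : (1+a)*(1+a*c) ≤ (1+a)*2 := by nlinarith
  gcongr

end OffsetMLE
namespace OffsetMLE

lemma basic_facts (θ₀ : ℝ) (n : ℕ) (hn2 : 2 ≤ n)
    (hx : Real.exp (θ₀ - Real.log n) ≤ 1) :
    ((n:ℝ) - 1) * Real.exp θ₀ / 4 ≤ (n.choose 2 : ℝ) * invlogit (θ₀ - Real.log n) ∧
    invlogit (θ₀ - Real.log n) ≤ 1/2 := by
  set a := Real.exp (θ₀ - Real.log n) with ha_def
  have ha0 : 0 < a := Real.exp_pos _
  have hn0 : (0:ℝ) < n := by positivity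
  have han : a * n = Real.exp θ₀ := by
    rw [ha_def, Real.exp_sub, Real.exp_log hn0]
    field_simp
  have hp : invlogit (θ₀ - Real.log n) = a / (1 + a) := rfl
  constructor
  · rw [hp, Nat.cast_choose_two]
    have h1 : a / (1+a) ≥ a / 2 := by
      apply div_le_div_of_nonneg_left ha0.le (by linarith) (by linarith)
    have h2 : (n:ℝ) * ((n:ℝ)-1) / 2 * (a/2) = ((n:ℝ)-1) * Real.exp θ₀ / 4 := by
      rw [← han]; ring
    have hn1 : (0:ℝ) ≤ (n:ℝ) * ((n:ℝ)-1) / 2 := by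
      have : (1:ℝ) ≤ n := by exact_mod_cast (by omega : 1 ≤ n)
      nlinarith
    calc ((n:ℝ)-1) * Real.exp θ₀ / 4 = (n:ℝ) * ((n:ℝ)-1) / 2 * (a/2) := h2.symm
      _ ≤ (n:ℝ) * ((n:ℝ)-1) / 2 * (a/(1+a)) := by
          apply mul_le_mul_of_nonneg_left h1 hn1
  · rw [hp, div_le_iff₀ (by linarith)]
    linarith

set_option maxHeartbeats 1000000 in
lemma bound1 (θ₀ ε δ : ℝ) (hε : 0 < ε) (hδ : 0 < δ)
    (hδ1 : δ ≤ (1 - Real.exp (-ε))/2) (hδ2 : δ ≤ (Real.exp ε - 1)/(1 + Real.exp ε))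
    (n : ℕ) (hn2 : 2 ≤ n) (hx : Real.exp (θ₀ - Real.log n) ≤ 1) :
    binomProb (n.choose 2) (invlogit (θ₀ - Real.log n))
      (fun k => 0 < k ∧ k < n.choose 2 ∧
        ε < |logit ((k : ℝ) / (n.choose 2 : ℝ)) + Real.log n - θ₀|)
    ≤ (4 * Real.exp (-θ₀) / δ^2) / ((n:ℝ) - 1) := by
  set x := θ₀ - Real.log n with hx_def
  set m := n.choose 2 with hm_def
  set p := invlogit x with hp_def
  set a := Real.exp x with ha_def
  have ha0 : 0 < a := Real.exp_pos _
  have hp0 : 0 < p := invlogit_pos x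
  have hp1 : p < 1 := invlogit_lt_one x
  obtain ⟨hmp, hphalf⟩ := basic_facts θ₀ n hn2 hx
  have hn1 : (1:ℝ) ≤ (n:ℝ) - 1 := by
    have : (2:ℝ) ≤ n := by exact_mod_cast hn2
    linarith
  have hM0 : 0 < (m:ℝ) * p := by
    have : (0:ℝ) < ((n:ℝ)-1) * Real.exp θ₀ / 4 := by positivity
    linarith
  have hm0 : 0 < (m:ℝ) := by
    rcases (mul_pos_iff.mp hM0) with ⟨h, _⟩ | ⟨h, _⟩
    · exact h
    · linarith
  have hpa : p = a / (1 + a) := rfl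
  -- Chebyshev with t = δ * (m * p)
  have hcheb := cheby m p (δ * ((m:ℝ)*p)) hp0.le hp1.le (by positivity)
    (fun k => 0 < k ∧ k < m ∧ ε < |logit ((k : ℝ) / (m : ℝ)) + Real.log n - θ₀|) ?_
  · calc binomProb m p _ ≤ (m:ℝ)*p*(1-p)/(δ * ((m:ℝ)*p))^2 := hcheb
      _ = (1-p)/(δ^2*((m:ℝ)*p)) := by
          field_simp
      _ ≤ 1/(δ^2*((m:ℝ)*p)) := by gcongr <;> linarith
      _ ≤ 1/(δ^2*(((n:ℝ)-1) * Real.exp θ₀ / 4)) := by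
          gcongr
      _ = (4 * Real.exp (-θ₀) / δ^2) / ((n:ℝ) - 1) := by
          rw [Real.exp_neg]
          have h1 : Real.exp θ₀ ≠ 0 := (Real.exp_pos _).ne'
          have h2 : ((n:ℝ)-1) ≠ 0 := by linarith
          field_simp
  · -- the deviation event forces |k - mp| ≥ δ m p
    rintro k hk ⟨hk0, hkm, hdev⟩
    have hkR0 : (0:ℝ) < k := by exact_mod_cast hk0
    have hkRm : (k:ℝ) < m := by exact_mod_cast hkm
    have hfrac0 : 0 < (k:ℝ)/(m:ℝ) := by positivity
    have hfrac1 : (k:ℝ)/(m:ℝ) < 1 := by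
      rw [div_lt_one hm0]; exact hkRm
    set L := logit ((k : ℝ) / (m : ℝ)) with hL_def
    have hinv : invlogit L = (k:ℝ)/(m:ℝ) := invlogit_logit hfrac0 hfrac1
    have hdev' : ε < |L - x| := by
      have : L + Real.log n - θ₀ = L - x := by rw [hx_def]; ring
      rwa [this] at hdev
    rcases lt_abs.mp hdev' with hcase | hcase
    · -- L > x + ε : upper deviation
      have hLgt : x + ε < L := by linarith
      have hmono : invlogit (x + ε) < invlogit L := invlogit_strictMono hLgt
      have hup : invlogit (x + ε) = a * Real.exp ε / (1 + a * Real.exp ε) := by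
        unfold invlogit
        rw [Real.exp_add]
      have hgap := gap_hi a (Real.exp ε) ha0 hx
        (by have h := Real.exp_lt_exp.mpr hε; rwa [Real.exp_zero] at h)
      rw [← hup, ← hpa] at hgap
      have hδ2' : p * δ ≤ p * ((Real.exp ε - 1)/(1 + Real.exp ε)) := by
        apply mul_le_mul_of_nonneg_left hδ2 hp0.le
      have hkey : p + p * δ ≤ (k:ℝ)/(m:ℝ) := by
        rw [hinv] at hmono
        have : p * ((Real.exp ε - 1)/(1 + Real.exp ε)) ≤ invlogit (x+ε) - p := by
          calc p * ((Real.exp ε - 1)/(1 + Real.exp ε))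
              = p * ((Real.exp ε - 1)/(1 + Real.exp ε)) := rfl
            _ ≤ _ := hgap
        linarith
      have : δ * ((m:ℝ)*p) ≤ (k:ℝ) - (m:ℝ)*p := by
        have h2 : (p + p * δ) * (m:ℝ) ≤ (k:ℝ) := (le_div_iff₀ hm0).mp hkey
        nlinarith
      calc δ * ((m:ℝ)*p) ≤ (k:ℝ) - (m:ℝ)*p := this
        _ ≤ |(k:ℝ) - (m:ℝ)*p| := le_abs_self _
    · -- L < x - ε : lower deviation
      have hLlt : L < x - ε := by linarith
      have hmono : invlogit L < invlogit (x - ε) := invlogit_strictMono hLlt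
      have hdn : invlogit (x - ε) = a * Real.exp (-ε) / (1 + a * Real.exp (-ε)) := by
        unfold invlogit
        rw [show x - ε = x + (-ε) by ring, Real.exp_add]
      have hexpneg : Real.exp (-ε) < 1 := by
        rw [Real.exp_lt_one_iff]; linarith
      have hgap := gap_lo a (Real.exp (-ε)) ha0 hx (Real.exp_pos _) hexpneg
      rw [← hdn, ← hpa] at hgap
      have hδ1' : p * δ ≤ p * ((1 - Real.exp (-ε))/2) := by
        apply mul_le_mul_of_nonneg_left hδ1 hp0.le
      have hkey : (k:ℝ)/(m:ℝ) ≤ p - p * δ := by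
        rw [hinv] at hmono
        linarith
      have : δ * ((m:ℝ)*p) ≤ (m:ℝ)*p - (k:ℝ) := by
        have h2 : (k:ℝ) ≤ (p - p * δ) * (m:ℝ) := (div_le_iff₀ hm0).mp hkey
        nlinarith
      calc δ * ((m:ℝ)*p) ≤ (m:ℝ)*p - (k:ℝ) := this
        _ ≤ |(k:ℝ) - (m:ℝ)*p| := by
            rw [abs_sub_comm]
            exact le_abs_self _
set_option maxHeartbeats 1000000 in
lemma bound2 (θ₀ : ℝ) (n : ℕ) (hn2 : 2 ≤ n)
    (hx : Real.exp (θ₀ - Real.log n) ≤ 1) :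
    binomProb (n.choose 2) (invlogit (θ₀ - Real.log n))
      (fun k => k = 0 ∨ k = n.choose 2)
    ≤ (4 * Real.exp (-θ₀)) / ((n:ℝ) - 1) := by
  set x := θ₀ - Real.log n with hx_def
  set m := n.choose 2 with hm_def
  set p := invlogit x with hp_def
  have hp0 : 0 < p := invlogit_pos x
  have hp1 : p < 1 := invlogit_lt_one x
  obtain ⟨hmp, hphalf⟩ := basic_facts θ₀ n hn2 hx
  have hn1 : (1:ℝ) ≤ (n:ℝ) - 1 := by
    have : (2:ℝ) ≤ n := by exact_mod_cast hn2
    linarith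
  have hM0 : 0 < (m:ℝ) * p := by
    have : (0:ℝ) < ((n:ℝ)-1) * Real.exp θ₀ / 4 := by positivity
    linarith
  have hm0 : 0 < (m:ℝ) := by
    rcases (mul_pos_iff.mp hM0) with ⟨h, _⟩ | ⟨h, _⟩
    · exact h
    · linarith
  have hcheb := cheby m p ((m:ℝ)*p) hp0.le hp1.le hM0
    (fun k => k = 0 ∨ k = m) ?_
  · calc binomProb m p _ ≤ (m:ℝ)*p*(1-p)/((m:ℝ)*p)^2 := hcheb
      _ = (1-p)/((m:ℝ)*p) := by
          field_simp
      _ ≤ 1/((m:ℝ)*p) := by gcongr <;> linarith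
      _ ≤ 1/(((n:ℝ)-1) * Real.exp θ₀ / 4) := by gcongr
      _ = (4 * Real.exp (-θ₀)) / ((n:ℝ) - 1) := by
          rw [Real.exp_neg]
          have h1 : Real.exp θ₀ ≠ 0 := (Real.exp_pos _).ne'
          have h2 : ((n:ℝ)-1) ≠ 0 := by linarith
          field_simp
  · rintro k hk (rfl | rfl)
    · rw [Nat.cast_zero, zero_sub, abs_neg, abs_of_pos hM0]
    · have hple : p ≤ 1/2 := hphalf
      have h1 : (m:ℝ) - (m:ℝ)*p ≥ (m:ℝ)*p := by nlinarith
      calc (m:ℝ)*p ≤ (m:ℝ) - (m:ℝ)*p := h1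
        _ ≤ |(m:ℝ) - (m:ℝ)*p| := le_abs_self _

end OffsetMLE

/-- Consistency of the MLE in the (non-projective) offset Bernoulli model:
with `E_n ~ Binomial(C(n,2), logit⁻¹(θ₀ − log n))`, the estimator
`θ̂_n = logit(E_n/C(n,2)) + log n` converges in probability to `θ₀`:
for every `ε > 0`, the probability that `θ̂_n` is defined yet deviates from
`θ₀` by more than `ε` tends to `0`, and the probability that `θ̂_n` is
undefined (`E_n ∈ {0, C(n,2)}`) also tends to `0`. -/
theorem offset_bernoulli_mle_consistent (θ₀ : ℝ) :
    ∀ ε : ℝ, 0 < ε →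
      Tendsto (fun n : ℕ =>
          binomProb (n.choose 2) (invlogit (θ₀ - Real.log n))
            (fun k => 0 < k ∧ k < n.choose 2 ∧
              ε < |logit ((k : ℝ) / (n.choose 2 : ℝ)) + Real.log n - θ₀|))
        atTop (nhds 0) ∧
      Tendsto (fun n : ℕ =>
          binomProb (n.choose 2) (invlogit (θ₀ - Real.log n))
            (fun k => k = 0 ∨ k = n.choose 2))
        atTop (nhds 0) := by
  intro ε hε
  set δ₁ := (1 - Real.exp (-ε))/2 with hδ₁def
  set δ₂ := (Real.exp ε - 1)/(1 + Real.exp ε) with hδ₂def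
  have he1 : Real.exp (-ε) < 1 := by rw [Real.exp_lt_one_iff]; linarith
  have he2 : 1 < Real.exp ε := by
    have h := Real.exp_lt_exp.mpr hε; rwa [Real.exp_zero] at h
  have hδ₁ : 0 < δ₁ := by rw [hδ₁def]; linarith
  have hδ₂ : 0 < δ₂ := by
    rw [hδ₂def]
    apply div_pos (by linarith) (by positivity)
  set δ := min δ₁ δ₂ with hδdef
  have hδ : 0 < δ := lt_min hδ₁ hδ₂
  have hev : ∀ᶠ n : ℕ in atTop, 2 ≤ n ∧ Real.exp (θ₀ - Real.log n) ≤ 1 := by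
    have h1 : ∀ᶠ n : ℕ in atTop, 2 ≤ n := eventually_ge_atTop 2
    have h2 : ∀ᶠ n : ℕ in atTop, Real.exp θ₀ ≤ (n:ℝ) :=
      tendsto_natCast_atTop_atTop.eventually_ge_atTop (Real.exp θ₀)
    filter_upwards [h1, h2] with n hn2 hne
    refine ⟨hn2, ?_⟩
    have hn0 : (0:ℝ) < n := by
      have : (2:ℝ) ≤ n := by exact_mod_cast hn2
      linarith
    rw [Real.exp_sub, Real.exp_log hn0, div_le_one hn0]
    exact hne
  have hlim : ∀ C : ℝ, Tendsto (fun n : ℕ => C / ((n:ℝ)-1)) atTop (nhds 0) := by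
    intro C
    apply Tendsto.div_atTop tendsto_const_nhds
    have h := tendsto_atTop_add_const_right atTop (-1 : ℝ) tendsto_natCast_atTop_atTop
    simpa [sub_eq_add_neg] using h
  have hnonneg : ∀ (A : ℕ → Prop) (n : ℕ),
      0 ≤ binomProb (n.choose 2) (invlogit (θ₀ - Real.log n)) A := fun A n =>
    OffsetMLE.binomProb_nonneg _ _ _ (OffsetMLE.invlogit_pos _).le
      (OffsetMLE.invlogit_lt_one _).le
  constructor
  · apply squeeze_zero' (Eventually.of_forall fun n => hnonneg _ n) _
      (hlim (4 * Real.exp (-θ₀) / δ^2))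
    filter_upwards [hev] with n hn
    exact OffsetMLE.bound1 θ₀ ε δ hε hδ (min_le_left _ _) (min_le_right _ _) n hn.1 hn.2
  · apply squeeze_zero' (Eventually.of_forall fun n => hnonneg _ n) _
      (hlim (4 * Real.exp (-θ₀)))
    filter_upwards [hev] with n hn
    exact OffsetMLE.bound2 θ₀ n hn.1 hn.2
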